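/- For every compact set E ⊆ {t ∈ ℂ : |1 − Rt| < 1}, there exist positive constants m and M such that for every integer n ≥ 1, every t ∈ E, and every real s with 0 ≤ s ≤ n: | exp(−(1/μ − μ)·t·s) − μ^{−n}·λ(ts/n)ⁿ | ≤ M·s²·e^{−ms}/n. (Here ts/n lies in the closed disk {|w − 1/R| ≤ 1/R}, on which λ is defined.) -/

import Mathlib

open Complex Set Filter MeasureTheory

/-- `μ = (R - √(R²-4))/2`. -/
noncomputable def mu (R : ℝ) : ℝ := (R - Real.sqrt (R ^ 2 - 4)) / 2

/-- The Möbius transformation `λ(z) = (z - μ)/(μz - 1)`. -/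
noncomputable def lam (R : ℝ) (z : ℂ) : ℂ := (z - (mu R : ℂ)) / ((mu R : ℂ) * z - 1)

/-- The shifted Zhukovsky-type map `ψ(w) = Rw - 1 + 1/(Rw - 1)`. -/
noncomputable def psi (R : ℝ) (w : ℂ) : ℂ := (R : ℂ) * w - 1 + ((R : ℂ) * w - 1)⁻¹

/-- `χ(t) = t ∑_{k ∈ ℤ} μ^{4k} exp((μ - 1/μ) μ^{4k} t)`. -/
noncomputable def chi (R : ℝ) (t : ℂ) : ℂ :=
  t * ∑' k : ℤ, (mu R : ℂ) ^ (4 * k) *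
    Complex.exp (((mu R : ℂ) - (mu R : ℂ)⁻¹) * (mu R : ℂ) ^ (4 * k) * t)

/-- The region `D = {t : |t - 1/R| < 1/R, Re t > Rμ²/2}`. -/
def Dset (R : ℝ) : Set ℂ :=
  {t | ‖t - 1 / (R : ℂ)‖ < 1 / R ∧ R * (mu R) ^ 2 / 2 < t.re}

/-- The region `𝔇 = {w : |w - R/(R²-1)| > 1/(R²-1), |w| < 1}`. -/
def frakD (R : ℝ) : Set ℂ :=
  {w | 1 / (R ^ 2 - 1) < ‖w - (R : ℂ) / (((R : ℝ) ^ 2 - 1 : ℝ) : ℂ)‖ ∧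
    ‖w‖ < 1}

/-- The orthogonality domain `G₁ = ψ(𝔇)`. -/
noncomputable def G1 (R : ℝ) : Set ℂ := psi R '' frakD R

/-- `p` is the sequence of Carleman (Bergman) orthonormal polynomials of `G₁`:
`p n` has degree `n`, real positive leading coefficient, and
`(1/π) ∫_{G₁} pₙ conj(pₘ) dA = δ_{n,m}`. -/
def IsCarleman (R : ℝ) (p : ℕ → Polynomial ℂ) : Prop :=
  (∀ n, (p n).natDegree = n) ∧
  (∀ n, 0 < (p n).leadingCoeff.re ∧ (p n).leadingCoeff.im = 0) ∧
  (∀ n m, ∫ z in G1 R, (p n).eval z * (starRingEnd ℂ) ((p m).eval z) =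
      if n = m then (Real.pi : ℂ) else 0)

/-- The limit functions `f_q` of Theorem 1.1. -/
noncomputable def fq (R q : ℝ) (t : ℂ) : ℂ :=
  (1 - (mu R : ℂ) * t) ^ 2 * (1 - (mu R : ℂ) ^ 3 / t) ^ 2 / ((1 - (mu R : ℂ) ^ 4) * R) *
    ((chi R ((((mu R) ^ (4 * q) : ℝ) : ℂ) * t) -
        chi R ((((mu R) ^ (4 * q + 2) : ℝ) : ℂ) / t)) /
      (t - (mu R : ℂ) ^ 2 / t))

/-- `Gₙ(t) = μ^{-n} λ(t)ⁿ λ'(t)`. -/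
noncomputable def Gfun (R : ℝ) (n : ℕ) (t : ℂ) : ℂ :=
  ((mu R : ℂ) ^ n)⁻¹ * (lam R t) ^ n * deriv (lam R) t

/- ### Auxiliary lemmas -/

notation "cabs" => (norm : ℂ → ℝ)

lemma aux_exp_quad (w : ℂ) (hw : cabs w ≤ 2) :
    cabs (Complex.exp w - 1 - w) ≤ 2 * cabs w ^ 2 := by
  have h2 : cabs (w / 2) ≤ 1 := by
    rw [norm_div, Complex.norm_two]; linarith
  have hδ := Complex.norm_exp_sub_one_sub_id_le h2
  set d := Complex.exp (w / 2) - 1 - w / 2 with hd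
  clear_value d
  have hexp : Complex.exp w = (1 + w / 2 + d) ^ 2 := by
    have h1 : Complex.exp (w / 2) = 1 + w / 2 + d := by rw [hd]; ring
    have h3 : w = w / 2 + w / 2 := by ring
    rw [h3, Complex.exp_add, h1]; ring
  have heq : Complex.exp w - 1 - w = w ^ 2 / 4 + d * (2 + w + d) := by
    rw [hexp]; ring
  have hwd : cabs (w / 2) ^ 2 = cabs w ^ 2 / 4 := by
    rw [norm_div, Complex.norm_two]; ring
  have hdle : cabs d ≤ cabs w ^ 2 / 4 := by rw [← hwd]; exact hδ
  have hd1 : cabs d ≤ 1 := by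
    calc cabs d ≤ cabs (w / 2) ^ 2 := hδ
      _ ≤ 1 := by nlinarith [norm_nonneg (w / 2)]
  rw [heq]
  calc cabs (w ^ 2 / 4 + d * (2 + w + d))
      ≤ cabs (w ^ 2 / 4) + cabs (d * (2 + w + d)) := norm_add_le _ _
    _ = cabs w ^ 2 / 4 + cabs d * cabs (2 + w + d) := by
        rw [norm_mul, norm_div, norm_pow]
        norm_num
    _ ≤ cabs w ^ 2 / 4 + (cabs w ^ 2 / 4) * (2 + 2 + 1) := by
        have h5 : cabs (2 + w + d) ≤ 2 + 2 + 1 := by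
          calc cabs (2 + w + d) ≤ cabs (2 + w) + cabs d :=
                norm_add_le _ _
            _ ≤ cabs 2 + cabs w + cabs d := by
                linarith [norm_add_le (2 : ℂ) w]
            _ ≤ 2 + 2 + 1 := by rw [Complex.norm_two]; linarith
        have h6 : (0:ℝ) ≤ cabs (2 + w + d) := norm_nonneg _
        nlinarith [norm_nonneg d]
    _ ≤ 2 * cabs w ^ 2 := by nlinarith [norm_nonneg w]

lemma abs_sub_le' (x y : ℂ) : cabs (x - y) ≤ cabs x + cabs y := by
  simpa [sub_eq_add_neg, norm_neg] using norm_add_le x (-y)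

lemma aux_pow_sub (B : ℝ) (hB : 0 ≤ B) (v w : ℂ) (hv : cabs v ≤ B)
    (hw : cabs w ≤ B) (n : ℕ) :
    cabs (v ^ n - w ^ n) ≤ n * cabs (v - w) * B ^ (n - 1) := by
  induction n with
  | zero => simp
  | succ k ih =>
    have key : v ^ (k + 1) - w ^ (k + 1) = v * (v ^ k - w ^ k) + (v - w) * w ^ k := by ring
    have h1 : cabs (v ^ (k + 1) - w ^ (k + 1))
        ≤ cabs v * cabs (v ^ k - w ^ k)
          + cabs (v - w) * cabs w ^ k := by
      rw [key]
      calc cabs (v * (v ^ k - w ^ k) + (v - w) * w ^ k)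
          ≤ cabs (v * (v ^ k - w ^ k)) + cabs ((v - w) * w ^ k) :=
            norm_add_le _ _
        _ = _ := by rw [norm_mul, norm_mul, norm_pow]
    have hwk : cabs w ^ k ≤ B ^ k := pow_le_pow_left₀ (norm_nonneg w) hw k
    have h2 : cabs v * cabs (v ^ k - w ^ k)
        ≤ B * (k * cabs (v - w) * B ^ (k - 1)) := by
      apply mul_le_mul hv ih (norm_nonneg _)
      exact hB
    rcases Nat.eq_zero_or_pos k with hk | hk
    · subst hk
      simp
    · have hBk : B * B ^ (k - 1) = B ^ k := by
        rw [← pow_succ']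
        congr 1
        omega
      have h3 : cabs (v - w) * cabs w ^ k ≤ cabs (v - w) * B ^ k :=
        mul_le_mul_of_nonneg_left hwk (norm_nonneg _)
      have hcast : ((k + 1 : ℕ) : ℝ) = (k : ℝ) + 1 := by push_cast; ring
      have hsub : (k + 1) - 1 = k := by omega
      rw [hsub, hcast]
      have h4 : B * ((k : ℝ) * cabs (v - w) * B ^ (k - 1))
          = (k : ℝ) * cabs (v - w) * (B * B ^ (k - 1)) := by ring
      rw [h4, hBk] at h2
      calc cabs (v ^ (k + 1) - w ^ (k + 1))
          ≤ (k : ℝ) * cabs (v - w) * B ^ k + cabs (v - w) * B ^ k := by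
            linarith
        _ = ((k : ℝ) + 1) * cabs (v - w) * B ^ k := by ring

lemma aux_contr {b u K E1 X T Y : ℝ} (hY0 : 0 ≤ Y) (hY : Y ≤ X + T)
    (hX0 : 0 ≤ X) (hX3 : X ≤ 3) (hT0 : 0 ≤ T) (hT : T ≤ K * u ^ 2)
    (hu0 : 0 ≤ u) (hu1 : u ≤ 1) (hK : 0 < K) (hE1 : 0 ≤ E1)
    (hX2 : X ^ 2 ≤ 1 - 2 * b + E1 * u ^ 2)
    (hC7 : (E1 + 6 * K + K ^ 2 + 1) * u ^ 2 ≤ b) (hb : 0 ≤ b) :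
    Y ≤ Real.exp (-(b / 2)) := by
  have hXT : 0 ≤ X + T := by linarith
  have h1 : Y ^ 2 ≤ (X + T) ^ 2 := by nlinarith
  have hu2 : u ^ 2 ≤ 1 := by nlinarith
  have h2 : T ^ 2 ≤ K ^ 2 * u ^ 2 := by
    have ht2 : T ^ 2 ≤ (K * u ^ 2) ^ 2 := by nlinarith
    nlinarith [mul_nonneg (mul_nonneg (mul_nonneg hK.le hK.le) (sq_nonneg u))
      (sub_nonneg.2 hu2)]
  have h3 : X * T ≤ 3 * (K * u ^ 2) := by nlinarith
  have h4 : Y ^ 2 ≤ 1 - b := by nlinarith [sq_nonneg u]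
  have h5 : Real.exp (-(b / 2)) ^ 2 = Real.exp (-b) := by
    rw [sq, ← Real.exp_add]; congr 1; ring
  have h6 : (1 : ℝ) - b ≤ Real.exp (-b) := by
    have := Real.add_one_le_exp (-b)
    linarith
  apply le_of_pow_le_pow_left₀ two_ne_zero (Real.exp_nonneg _)
  rw [h5]
  linarith

lemma aux_X2 (a u r c : ℝ) (t : ℂ) (ha : 0 < a) (hu0 : 0 ≤ u)
    (hc : c ≤ t.re) (htr : cabs t ≤ r) (hr : 0 ≤ r) :
    cabs (1 - (a:ℂ) * (t * (u:ℂ))) ^ 2 ≤ 1 - 2*(a*c*u) + (a^2*r^2)*u^2 := by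
  have htsq : t.re ^ 2 + t.im ^ 2 ≤ r ^ 2 := by
    have h7 : cabs t ^ 2 ≤ r ^ 2 := by nlinarith [norm_nonneg t]
    rw [Complex.sq_norm, Complex.normSq_apply] at h7
    nlinarith
  rw [Complex.sq_norm, Complex.normSq_apply]
  simp only [Complex.sub_re, Complex.sub_im, Complex.mul_re, Complex.mul_im,
    Complex.one_re, Complex.one_im, Complex.ofReal_re, Complex.ofReal_im,
    mul_zero, zero_mul, sub_zero, zero_sub, mul_one, neg_neg, neg_mul, mul_neg]
  nlinarith [mul_nonneg (mul_nonneg ha.le hu0) (sub_nonneg.2 hc), sq_nonneg u,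
    mul_nonneg (mul_nonneg ha.le ha.le) (mul_nonneg (sq_nonneg u) (sub_nonneg.2 htsq))]

lemma aux_lam_lt (R μ : ℝ) (hμ0 : 0 < μ) (hμ1 : μ < 1) (hid : R * μ = μ ^ 2 + 1)
    (hR0 : 0 < R) (z : ℂ) (h1 : cabs (1 - (R:ℂ) * z) < 1)
    (hdpos : 0 < cabs ((μ:ℂ) * z - 1)) :
    cabs ((z - (μ:ℂ)) / ((μ:ℂ) * z - 1)) < μ := by
  set x := z.re with hx
  clear_value x
  set y := z.im with hy
  clear_value y
  have h2 : R * (x ^ 2 + y ^ 2) < 2 * x := by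
    have h1' : cabs (1 - (R : ℂ) * z) ^ 2 < 1 := by
      nlinarith [norm_nonneg (1 - (R : ℂ) * z)]
    rw [Complex.sq_norm, Complex.normSq_apply] at h1'
    simp only [Complex.sub_re, Complex.sub_im, Complex.mul_re, Complex.mul_im,
      Complex.one_re, Complex.one_im, Complex.ofReal_re, Complex.ofReal_im,
      mul_zero, zero_mul, sub_zero, zero_sub, mul_one, neg_neg, neg_mul, mul_neg,
      ← hx, ← hy] at h1'
    nlinarith [h1', hR0]
  have h3 : (μ ^ 2 + 1) * (x ^ 2 + y ^ 2) < 2 * μ * x := by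
    have h3a := mul_lt_mul_of_pos_left h2 hμ0
    nlinarith [h3a]
  rw [norm_div, div_lt_iff₀ hdpos]
  apply lt_of_pow_lt_pow_left₀ 2 (by positivity)
  rw [mul_pow, Complex.sq_norm, Complex.sq_norm, Complex.normSq_apply, Complex.normSq_apply]
  simp only [Complex.sub_re, Complex.sub_im, Complex.mul_re, Complex.mul_im,
    Complex.one_re, Complex.one_im, Complex.ofReal_re, Complex.ofReal_im,
    mul_zero, zero_mul, sub_zero, zero_sub, mul_one, neg_neg, neg_mul, mul_neg,
    ← hx, ← hy]
  have hfact : (0:ℝ) < 1 - μ ^ 2 := by nlinarith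
  nlinarith [mul_lt_mul_of_pos_left h3 hfact]

lemma mu_facts {R : ℝ} (hR : 2 < R) :
    0 < mu R ∧ mu R < 1 ∧ R * mu R = mu R ^ 2 + 1 := by
  have hR0 : (0:ℝ) < R := by linarith
  have h4 : (0:ℝ) ≤ R ^ 2 - 4 := by nlinarith
  have hs : Real.sqrt (R ^ 2 - 4) ^ 2 = R ^ 2 - 4 := Real.sq_sqrt h4
  have hs0 : 0 ≤ Real.sqrt (R ^ 2 - 4) := Real.sqrt_nonneg _
  have hslt : Real.sqrt (R ^ 2 - 4) < R := by
    rw [show Real.sqrt (R ^ 2 - 4) < R ↔ R ^ 2 - 4 < R ^ 2 from Real.sqrt_lt' hR0]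
    linarith
  have hgt : R - 2 < Real.sqrt (R ^ 2 - 4) := by
    rw [show R - 2 < Real.sqrt (R ^ 2 - 4) ↔ (R - 2) ^ 2 < R ^ 2 - 4 from
      Real.lt_sqrt (by linarith)]
    nlinarith
  refine ⟨by unfold mu; linarith, by unfold mu; linarith, ?_⟩
  unfold mu
  nlinarith [hs]

set_option maxHeartbeats 2000000 in
/-- Lemma 3.1: for every compact `E ⊆ {|1 - Rt| < 1}` there are `m, M > 0` such that for
`n ≥ 1`, `t ∈ E`, `0 ≤ s ≤ n`:
`|exp(-(1/μ - μ)ts) - μ^{-n} λ(ts/n)ⁿ| ≤ M s² e^{-ms}/n`. -/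
theorem stmt_12 (R : ℝ) (hR : 2 < R) (E : Set ℂ)
    (hE : E ⊆ {t : ℂ | ‖1 - (R : ℂ) * t‖ < 1}) (hEc : IsCompact E) :
    ∃ m > (0 : ℝ), ∃ M > (0 : ℝ), ∀ n : ℕ, 1 ≤ n → ∀ t ∈ E, ∀ s : ℝ, 0 ≤ s → s ≤ n →
      ‖Complex.exp (-(((mu R)⁻¹ - mu R : ℝ) : ℂ) * t * (s : ℂ)) -
          ((mu R : ℂ) ^ n)⁻¹ * (lam R (t * (s : ℂ) / (n : ℂ))) ^ n‖ ≤
        M * s ^ 2 * Real.exp (-m * s) / n := by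
  rcases E.eq_empty_or_nonempty with hEe | hne
  · refine ⟨1, one_pos, 1, one_pos, ?_⟩
    intro n hn t ht
    rw [hEe] at ht
    exact ht.elim
  have hR0 : (0:ℝ) < R := by linarith
  obtain ⟨hμ0, hμ1, hid⟩ := mu_facts hR
  set μ := mu R with hμdef
  clear_value μ
  set a : ℝ := μ⁻¹ - μ with hadef
  clear_value a
  have hainv : μ⁻¹ = R - μ := by
    have h1 : μ * (R - μ) = 1 := by nlinarith
    exact inv_eq_of_mul_eq_one_right h1
  have ha2 : a = R - 2 * μ := by rw [hadef, hainv]; ring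
  have hμ2R : μ < 2 / R := by
    rw [lt_div_iff₀ hR0]
    nlinarith
  have ha : 0 < a := by nlinarith
  have haR : a ≤ R := by nlinarith
  -- facts about points of E
  have htE : ∀ t ∈ E, cabs (1 - (R : ℂ) * t) < 1 := fun t ht => hE ht
  have htco : ∀ t ∈ E, (1 - R * t.re) ^ 2 + (R * t.im) ^ 2 < 1 := by
    intro t ht
    have h := htE t ht
    have h2 : cabs (1 - (R : ℂ) * t) ^ 2 < 1 := by
      nlinarith [norm_nonneg (1 - (R : ℂ) * t)]
    rw [Complex.sq_norm, Complex.normSq_apply] at h2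
    simp only [Complex.sub_re, Complex.sub_im, Complex.mul_re, Complex.mul_im,
      Complex.one_re, Complex.one_im, Complex.ofReal_re, Complex.ofReal_im] at h2
    nlinarith [h2]
  have htre : ∀ t ∈ E, 0 < t.re := by
    intro t ht
    have h := htco t ht
    by_contra hc
    push_neg at hc
    nlinarith [sq_nonneg (R * t.im), sq_nonneg t.re, mul_pos hR0 hR0,
      mul_nonneg (mul_nonneg hR0.le hR0.le) (mul_nonneg (neg_nonneg.2 hc) (neg_nonneg.2 hc))]
  have htabs : ∀ t ∈ E, cabs t ≤ 2 / R := by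
    intro t ht
    have h := htE t ht
    have h1 : cabs ((R : ℂ) * t) ≤ cabs (1 - (R : ℂ) * t) + 1 := by
      calc cabs ((R : ℂ) * t) = cabs ((1:ℂ) - (1 - (R : ℂ) * t)) := by ring_nf
        _ ≤ cabs (1:ℂ) + cabs (1 - (R : ℂ) * t) := abs_sub_le' _ _
        _ = cabs (1 - (R : ℂ) * t) + 1 := by rw [norm_one]; ring
    rw [norm_mul, Complex.norm_real, Real.norm_eq_abs, abs_of_pos hR0] at h1
    rw [le_div_iff₀ hR0, mul_comm]
    linarith
  -- minimum of the real part on E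
  obtain ⟨t₀, ht₀E, ht₀⟩ := hEc.exists_isMinOn hne continuous_re.continuousOn
  set c := t₀.re with hcdef
  clear_value c
  have hc : 0 < c := by rw [hcdef]; exact htre t₀ ht₀E
  have hcle : ∀ t ∈ E, c ≤ t.re := fun t ht => by
    rw [hcdef]; exact isMinOn_iff.mp ht₀ t ht
  -- lower bound on the denominator
  set δ : ℝ := 1 - 4 / R ^ 2 with hδdef
  clear_value δ
  have hδ : 0 < δ := by
    rw [hδdef]
    have h1 : 4 / R ^ 2 < 1 := by rw [div_lt_one (by positivity)]; nlinarith
    linarith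
  have hden : ∀ z : ℂ, cabs z ≤ 2 / R → δ ≤ cabs (1 - (μ : ℂ) * z) := by
    intro z hz
    have h1 : cabs ((μ : ℂ) * z) ≤ 4 / R ^ 2 := by
      rw [norm_mul, Complex.norm_real, Real.norm_eq_abs, abs_of_pos hμ0]
      calc μ * cabs z ≤ (2 / R) * (2 / R) := by
            apply mul_le_mul hμ2R.le hz (norm_nonneg z) (by positivity)
        _ = 4 / R ^ 2 := by field_simp; ring
    have h2 : cabs (1:ℂ) - cabs ((μ:ℂ) * z) ≤ cabs (1 - (μ:ℂ) * z) := by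
      have := norm_sub_norm_le (1:ℂ) ((μ:ℂ) * z)
      simpa using this
    rw [norm_one] at h2
    rw [hδdef]
    linarith
  have hdenne : ∀ z : ℂ, cabs z ≤ 2 / R → (1 : ℂ) - (μ : ℂ) * z ≠ 0 := by
    intro z hz h
    have := hden z hz
    rw [h, norm_zero] at this
    linarith
  -- the basic algebraic identity for λ
  have hμC : (μ : ℂ) ≠ 0 := by exact_mod_cast hμ0.ne'
  have hlamid : ∀ z : ℂ, (1 : ℂ) - (μ : ℂ) * z ≠ 0 →
      lam R z / (μ : ℂ) = 1 - (a : ℂ) * z - (a : ℂ) * (μ : ℂ) * z ^ 2 / (1 - (μ : ℂ) * z) := by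
    intro z hz
    have haC : (a : ℂ) = (μ : ℂ)⁻¹ - (μ : ℂ) := by rw [hadef]; push_cast; ring
    rw [lam, ← hμdef, haC]
    have h2 : (μ : ℂ) * z - 1 ≠ 0 := by
      intro h
      exact hz (by linear_combination -h)
    rw [eq_sub_iff_add_eq, div_div, div_add_div _ _ (mul_ne_zero h2 hμC) hz,
      div_eq_iff (mul_ne_zero (mul_ne_zero h2 hμC) hz)]
    field_simp
    ring
  -- the quadratic closeness estimate
  set C : ℝ := 2 * a ^ 2 + a * μ / δ with hCdef
  clear_value C
  have hC : 0 < C := by rw [hCdef]; positivity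
  have hquad : ∀ z : ℂ, cabs z ≤ 2 / R →
      cabs (Complex.exp (-(a : ℂ) * z) - lam R z / (μ : ℂ)) ≤ C * cabs z ^ 2 := by
    intro z hz
    have hzne := hdenne z hz
    rw [hlamid z hzne]
    have key : Complex.exp (-(a : ℂ) * z) - (1 - (a:ℂ) * z - (a:ℂ) * (μ:ℂ) * z ^ 2 / (1 - (μ:ℂ) * z))
        = (Complex.exp (-(a : ℂ) * z) - 1 - (-(a : ℂ) * z))
          + (a : ℂ) * (μ : ℂ) * z ^ 2 / (1 - (μ : ℂ) * z) := by ring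
    rw [key]
    have habsaz : cabs (-(a : ℂ) * z) = a * cabs z := by
      rw [norm_mul, norm_neg, Complex.norm_real, Real.norm_eq_abs, abs_of_pos ha]
    have h1 : cabs (-(a : ℂ) * z) ≤ 2 := by
      rw [habsaz]
      calc a * cabs z ≤ R * (2 / R) := by
            apply mul_le_mul haR hz (norm_nonneg z) hR0.le
        _ = 2 := by field_simp
    have h2 := aux_exp_quad _ h1
    rw [habsaz] at h2
    have h4 : cabs ((a:ℂ) * (μ:ℂ) * z ^ 2 / (1 - (μ:ℂ) * z))
        ≤ a * μ * cabs z ^ 2 / δ := by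
      rw [norm_div, norm_mul, norm_mul, norm_pow, Complex.norm_real, Real.norm_eq_abs, Complex.norm_real, Real.norm_eq_abs,
        abs_of_pos ha, abs_of_pos hμ0]
      apply div_le_div_of_nonneg_left _ hδ (hden z hz)
      positivity
    calc cabs ((Complex.exp (-(a : ℂ) * z) - 1 - (-(a : ℂ) * z))
          + (a : ℂ) * (μ : ℂ) * z ^ 2 / (1 - (μ : ℂ) * z))
        ≤ cabs (Complex.exp (-(a : ℂ) * z) - 1 - (-(a : ℂ) * z))
          + cabs ((a : ℂ) * (μ : ℂ) * z ^ 2 / (1 - (μ : ℂ) * z)) :=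
          norm_add_le _ _
      _ ≤ 2 * (a * cabs z) ^ 2 + a * μ * cabs z ^ 2 / δ := add_le_add h2 h4
      _ = C * cabs z ^ 2 := by rw [hCdef]; field_simp
  -- |t * u| ≤ 2/R
  have htu : ∀ t ∈ E, ∀ u : ℝ, 0 ≤ u → u ≤ 1 → cabs (t * (u : ℂ)) ≤ 2 / R := by
    intro t ht u hu0 hu1
    rw [norm_mul, Complex.norm_real, Real.norm_eq_abs, _root_.abs_of_nonneg hu0]
    calc cabs t * u ≤ (2 / R) * 1 := by
          apply mul_le_mul (htabs t ht) hu1 hu0 (by positivity)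
      _ = 2 / R := by ring
  -- small-u bound for |λ(tu)/μ|
  set K : ℝ := a * μ * (2 / R) ^ 2 / δ with hKdef
  clear_value K
  have hK : 0 < K := by rw [hKdef]; positivity
  set C₇ : ℝ := a ^ 2 * (2 / R) ^ 2 + 6 * K + K ^ 2 + 1 with hC₇def
  clear_value C₇
  have hC₇ : 0 < C₇ := by rw [hC₇def]; positivity
  set u₀ : ℝ := min 1 (a * c / C₇) with hu₀def
  clear_value u₀
  have hu₀pos : 0 < u₀ := by rw [hu₀def]; exact lt_min one_pos (by positivity)
  have hu₀le1 : u₀ ≤ 1 := by rw [hu₀def]; exact min_le_left _ _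
  have hsmall : ∀ t ∈ E, ∀ u : ℝ, 0 ≤ u → u ≤ 1 → u ≤ u₀ →
      cabs (lam R (t * (u : ℂ)) / (μ : ℂ)) ≤ Real.exp (-(a * c / 2) * u) := by
    intro t ht u hu0 hu1 huu
    have habs_tu := htu t ht u hu0 hu1
    have hne' := hdenne _ habs_tu
    rw [hlamid _ hne']
    have htabs' := htabs t ht
    have htre' := hcle t ht
    set z : ℂ := t * (u:ℂ) with hzdef
    clear_value z
    set X : ℝ := cabs (1 - (a:ℂ) * z) with hXdef
    clear_value X
    set T : ℝ := cabs ((a:ℂ) * (μ:ℂ) * z ^ 2 / (1 - (μ:ℂ) * z)) with hTdef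
    clear_value T
    set Y : ℝ := cabs (1 - (a:ℂ) * z - (a:ℂ) * (μ:ℂ) * z ^ 2 / (1 - (μ:ℂ) * z))
      with hYdef
    have hY0 : 0 ≤ Y := by rw [hYdef]; exact norm_nonneg _
    have hX0 : 0 ≤ X := by rw [hXdef]; exact norm_nonneg _
    have hT0 : 0 ≤ T := by rw [hTdef]; exact norm_nonneg _
    have hY : Y ≤ X + T := by
      rw [hYdef, hXdef, hTdef]; exact abs_sub_le' _ _
    have habsz : cabs z ≤ (2 / R) * u := by
      rw [hzdef, norm_mul, Complex.norm_real, Real.norm_eq_abs, _root_.abs_of_nonneg hu0]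
      exact mul_le_mul_of_nonneg_right htabs' hu0
    have hX2 : X ^ 2 ≤ 1 - 2 * (a * c * u) + (a ^ 2 * (2 / R) ^ 2) * u ^ 2 := by
      rw [hXdef, hzdef]
      exact aux_X2 a u (2 / R) c t ha hu0 htre' htabs' (by positivity)
    have hX3 : X ≤ 3 := by
      rw [hXdef]
      have h1 : cabs ((a:ℂ) * z) = a * cabs z := by
        rw [norm_mul, Complex.norm_real, Real.norm_eq_abs, _root_.abs_of_pos ha]
      have h2 : a * cabs z ≤ a * (2 / R) := by
        have h2a : cabs z ≤ 2 / R := habs_tu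
        exact mul_le_mul_of_nonneg_left h2a ha.le
      have h3 : a * (2 / R) ≤ 2 := by
        have h4 : R * (2 / R) = 2 := by field_simp
        have h5 := mul_le_mul_of_nonneg_right haR (show (0:ℝ) ≤ 2 / R by positivity)
        linarith
      calc cabs (1 - (a:ℂ) * z)
          ≤ cabs (1:ℂ) + cabs ((a:ℂ) * z) := abs_sub_le' _ _
        _ = 1 + a * cabs z := by rw [norm_one, h1]
        _ ≤ 3 := by linarith
    have hT : T ≤ K * u ^ 2 := by
      rw [hTdef, norm_div, norm_mul, norm_mul, norm_pow, Complex.norm_real, Real.norm_eq_abs, Complex.norm_real, Real.norm_eq_abs,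
        _root_.abs_of_pos ha, _root_.abs_of_pos hμ0]
      have h5 : cabs z ^ 2 ≤ (2 / R) ^ 2 * u ^ 2 := by
        have h5a : cabs z ^ 2 ≤ ((2 / R) * u) ^ 2 :=
          pow_le_pow_left₀ (norm_nonneg _) habsz 2
        calc cabs z ^ 2 ≤ ((2 / R) * u) ^ 2 := h5a
          _ = (2 / R) ^ 2 * u ^ 2 := by ring
      calc a * μ * cabs z ^ 2 / cabs (1 - (μ:ℂ) * z)
          ≤ a * μ * cabs z ^ 2 / δ := by
            apply div_le_div_of_nonneg_left _ hδ (hden _ habs_tu)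
            positivity
        _ ≤ a * μ * ((2 / R) ^ 2 * u ^ 2) / δ := by gcongr
        _ = K * u ^ 2 := by rw [hKdef]; ring
    have hC7u : (a ^ 2 * (2 / R) ^ 2 + 6 * K + K ^ 2 + 1) * u ^ 2 ≤ a * c * u := by
      have hu₀2 : u ≤ a * c / C₇ := by
        rw [hu₀def] at huu
        exact le_trans huu (min_le_right _ _)
      have h8 : C₇ * u ≤ a * c := by
        have h8a := mul_le_mul_of_nonneg_left hu₀2 hC₇.le
        have h8b : C₇ * (a * c / C₇) = a * c := by field_simp
        linarith
      have h9 : C₇ * u ^ 2 ≤ a * c * u := by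
        calc C₇ * u ^ 2 = (C₇ * u) * u := by ring
          _ ≤ (a * c) * u := mul_le_mul_of_nonneg_right h8 hu0
          _ = a * c * u := by ring
      calc (a ^ 2 * (2 / R) ^ 2 + 6 * K + K ^ 2 + 1) * u ^ 2 = C₇ * u ^ 2 := by
            rw [hC₇def]
        _ ≤ a * c * u := h9
    have hfin : Y ≤ Real.exp (-(a * c * u / 2)) :=
      aux_contr hY0 hY hX0 hX3 hT0 hT hu0 hu1 hK (by positivity) hX2 hC7u
        (by positivity)
    calc Y ≤ Real.exp (-(a * c * u / 2)) := hfin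
      _ = Real.exp (-(a * c / 2) * u) := by congr 1; ring
  -- strict contraction for u > 0
  have hlam_lt : ∀ t ∈ E, ∀ u : ℝ, 0 < u → u ≤ 1 → cabs (lam R (t * (u:ℂ))) < μ := by
    intro t ht u hu0 hu1
    have h1 : cabs (1 - (R : ℂ) * (t * (u:ℂ))) < 1 := by
      have heq : (1 : ℂ) - (R : ℂ) * (t * (u:ℂ)) = ((1 - u : ℝ) : ℂ) + (u : ℂ) * (1 - (R:ℂ) * t) := by
        push_cast
        ring
      rw [heq]
      have hb1 : cabs (((1 - u : ℝ) : ℂ) + (u : ℂ) * (1 - (R:ℂ) * t))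
          ≤ cabs ((1 - u : ℝ) : ℂ) + cabs ((u : ℂ) * (1 - (R:ℂ) * t)) :=
        norm_add_le _ _
      have hb2 : cabs ((1 - u : ℝ) : ℂ) = 1 - u := by
        rw [Complex.norm_real, Real.norm_eq_abs, _root_.abs_of_nonneg (by linarith : (0:ℝ) ≤ 1 - u)]
      have hb3 : cabs ((u : ℂ) * (1 - (R:ℂ) * t)) = u * cabs (1 - (R:ℂ) * t) := by
        rw [norm_mul, Complex.norm_real, Real.norm_eq_abs, _root_.abs_of_pos hu0]
      have hb4 := htE t ht
      have hb5 : u * cabs (1 - (R:ℂ) * t) < u * 1 := by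
        exact mul_lt_mul_of_pos_left hb4 hu0
      rw [hb2, hb3] at hb1
      linarith
    have hdpos : 0 < cabs ((μ:ℂ) * (t * (u:ℂ)) - 1) := by
      have habs_tu := htu t ht u hu0.le hu1
      have hd2 := hden _ habs_tu
      have heq2 : cabs ((μ:ℂ) * (t * (u:ℂ)) - 1) = cabs (1 - (μ:ℂ) * (t * (u:ℂ))) := by
        rw [show (μ:ℂ) * (t * (u:ℂ)) - 1 = -(1 - (μ:ℂ) * (t * (u:ℂ))) from by ring,
          norm_neg]
      rw [heq2]
      linarith
    rw [lam, ← hμdef]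
    exact aux_lam_lt R μ hμ0 hμ1 hid hR0 (t * (u:ℂ)) h1 hdpos
  -- uniform bound on [u₀, 1] via compactness
  have hcont : ContinuousOn (fun p : ℂ × ℝ => cabs (lam R (p.1 * (p.2 : ℂ))))
      (E ×ˢ Icc u₀ 1) := by
    intro p hp
    apply ContinuousAt.continuousWithinAt
    have hp1 : p.1 ∈ E := hp.1
    have hp2 : p.2 ∈ Icc u₀ 1 := hp.2
    have hz : cabs (p.1 * (p.2 : ℂ)) ≤ 2 / R :=
      htu p.1 hp1 p.2 (le_trans hu₀pos.le hp2.1) hp2.2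
    have hne' : (μ : ℂ) * (p.1 * (p.2:ℂ)) - 1 ≠ 0 := by
      intro h
      exact hdenne _ hz (by linear_combination -h)
    have hc1 : Continuous (fun p : ℂ × ℝ => p.1 * ((p.2 : ℝ) : ℂ)) := by
      exact continuous_fst.mul (Complex.continuous_ofReal.comp continuous_snd)
    apply continuous_norm.continuousAt.comp
    simp only [lam, ← hμdef]
    apply ContinuousAt.div
    · exact (hc1.sub continuous_const).continuousAt
    · exact ((continuous_const.mul hc1).sub continuous_const).continuousAt
    · exact hne'
  have hScomp : IsCompact (E ×ˢ Icc u₀ 1) := hEc.prod isCompact_Icc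
  have hSne : (E ×ˢ Icc u₀ 1).Nonempty := hne.prod ⟨u₀, le_refl _, hu₀le1⟩
  obtain ⟨p₁, hp₁S, hp₁⟩ := hScomp.exists_isMaxOn hSne hcont
  set ρ₃ : ℝ := max (cabs (lam R (p₁.1 * (p₁.2 : ℂ))) / μ) (1 / 2) with hρ₃def
  clear_value ρ₃
  have hρ₃lt1 : ρ₃ < 1 := by
    rw [hρ₃def]
    apply max_lt _ (by norm_num)
    rw [div_lt_one hμ0]
    exact hlam_lt p₁.1 hp₁S.1 p₁.2 (lt_of_lt_of_le hu₀pos hp₁S.2.1) hp₁S.2.2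
  have hρ₃pos : (0:ℝ) < ρ₃ := by
    rw [hρ₃def]
    exact lt_of_lt_of_le (by norm_num) (le_max_right _ _)
  set m₂ : ℝ := -Real.log ρ₃ with hm₂def
  clear_value m₂
  have hm₂pos : 0 < m₂ := by
    rw [hm₂def, neg_pos]
    exact Real.log_neg hρ₃pos hρ₃lt1
  have hbig : ∀ t ∈ E, ∀ u : ℝ, u₀ ≤ u → u ≤ 1 →
      cabs (lam R (t * (u:ℂ)) / (μ:ℂ)) ≤ Real.exp (-m₂ * u) := by
    intro t ht u huu hu1
    have hmem : (t, u) ∈ E ×ˢ Icc u₀ 1 := ⟨ht, huu, hu1⟩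
    have h1 : cabs (lam R (t * (u:ℂ))) ≤ cabs (lam R (p₁.1 * (p₁.2 : ℂ))) :=
      isMaxOn_iff.mp hp₁ (t, u) hmem
    have h2 : cabs (lam R (t * (u:ℂ)) / (μ:ℂ)) ≤ ρ₃ := by
      rw [norm_div, Complex.norm_real, Real.norm_eq_abs, abs_of_pos hμ0]
      calc cabs (lam R (t * (u:ℂ))) / μ
          ≤ cabs (lam R (p₁.1 * (p₁.2 : ℂ))) / μ := by gcongr
        _ ≤ ρ₃ := by rw [hρ₃def]; exact le_max_left _ _
    have h3 : ρ₃ = Real.exp (-m₂) := by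
      rw [hm₂def, neg_neg, Real.exp_log hρ₃pos]
    rw [h3] at h2
    calc cabs (lam R (t * (u:ℂ)) / (μ:ℂ)) ≤ Real.exp (-m₂) := h2
      _ ≤ Real.exp (-m₂ * u) := by
          apply Real.exp_le_exp.2
          have h7 : m₂ * u ≤ m₂ * 1 := mul_le_mul_of_nonneg_left hu1 hm₂pos.le
          linarith
  -- the final m
  set m : ℝ := min (a * c / 2) m₂ with hmdef
  clear_value m
  have hm : 0 < m := by rw [hmdef]; exact lt_min (by positivity) hm₂pos
  have hwB : ∀ t ∈ E, ∀ u : ℝ, 0 ≤ u → u ≤ 1 →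
      cabs (lam R (t * (u:ℂ)) / (μ:ℂ)) ≤ Real.exp (-m * u) := by
    intro t ht u hu0 hu1
    rcases le_or_gt u u₀ with h | h
    · calc cabs (lam R (t * (u:ℂ)) / (μ:ℂ)) ≤ Real.exp (-(a * c / 2) * u) :=
          hsmall t ht u hu0 hu1 h
        _ ≤ Real.exp (-m * u) := by
            apply Real.exp_le_exp.2
            have h7 : m ≤ a * c / 2 := by rw [hmdef]; exact min_le_left _ _
            have h8 : m * u ≤ (a * c / 2) * u := mul_le_mul_of_nonneg_right h7 hu0
            linarith
    · calc cabs (lam R (t * (u:ℂ)) / (μ:ℂ)) ≤ Real.exp (-m₂ * u) :=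
          hbig t ht u h.le hu1
        _ ≤ Real.exp (-m * u) := by
            apply Real.exp_le_exp.2
            have h7 : m ≤ m₂ := by rw [hmdef]; exact min_le_right _ _
            have h8 : m * u ≤ m₂ * u := mul_le_mul_of_nonneg_right h7 hu0
            linarith
  have hvB : ∀ t ∈ E, ∀ u : ℝ, 0 ≤ u → u ≤ 1 →
      cabs (Complex.exp (-(a : ℂ) * t * (u:ℂ))) ≤ Real.exp (-m * u) := by
    intro t ht u hu0 hu1
    have heq : (-(a : ℂ) * t * (u:ℂ)) = -(((a * u : ℝ) : ℂ) * t) := by push_cast; ring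
    rw [heq, Complex.norm_exp]
    simp only [Complex.neg_re, Complex.re_ofReal_mul]
    apply Real.exp_le_exp.2
    have h1 : c ≤ t.re := hcle t ht
    have h2 : m ≤ a * c / 2 := by rw [hmdef]; exact min_le_left _ _
    have h3 : m * u ≤ (a * c / 2) * u := mul_le_mul_of_nonneg_right h2 hu0
    have h4 : (a * u) * c ≤ (a * u) * t.re :=
      mul_le_mul_of_nonneg_left h1 (mul_nonneg ha.le hu0)
    have h5 : 0 ≤ (a * c) * u := by positivity
    nlinarith [h3, h4, h5]
  -- final constant
  set M : ℝ := C * (2 / R) ^ 2 * Real.exp m with hMdef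
  clear_value M
  have hM : 0 < M := by rw [hMdef]; positivity
  refine ⟨m, hm, M, hM, ?_⟩
  intro n hn t ht s hs0 hsn
  have hn0 : (0:ℝ) < n := by exact_mod_cast Nat.lt_of_lt_of_le Nat.zero_lt_one hn
  have hnC : (n : ℂ) ≠ 0 := by exact_mod_cast hn0.ne'
  set u : ℝ := s / n with hudef
  clear_value u
  have hu0 : 0 ≤ u := by rw [hudef]; exact div_nonneg hs0 hn0.le
  have hu1 : u ≤ 1 := by rw [hudef, div_le_one hn0]; exact hsn
  have harg : t * (s : ℂ) / (n : ℂ) = t * ((u : ℝ) : ℂ) := by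
    rw [hudef]
    push_cast
    ring
  rw [harg]
  set v : ℂ := Complex.exp (-(a : ℂ) * t * (u : ℂ)) with hvdef
  clear_value v
  set w : ℂ := lam R (t * (u:ℂ)) / (μ : ℂ) with hwdef
  clear_value w
  have hv : Complex.exp (-((a : ℝ) : ℂ) * t * (s : ℂ)) = v ^ n := by
    rw [hvdef, ← Complex.exp_nat_mul]
    congr 1
    have hns : ((u : ℝ) : ℂ) = (s : ℂ) / (n : ℂ) := by rw [hudef]; push_cast; ring
    rw [hns]
    field_simp
  have hw : ((μ : ℂ) ^ n)⁻¹ * (lam R (t * (u:ℂ))) ^ n = w ^ n := by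
    rw [hwdef, div_pow, div_eq_inv_mul]
  rw [hv, hw]
  have habs_tu := htu t ht u hu0 hu1
  have hvw : cabs (v - w) ≤ C * ((2 / R) * u) ^ 2 := by
    have hassoc : -(a : ℂ) * t * (u : ℂ) = -(a : ℂ) * (t * (u : ℂ)) := by ring
    have h1 := hquad (t * (u:ℂ)) habs_tu
    rw [hvdef, hwdef, hassoc]
    calc cabs (Complex.exp (-(a:ℂ) * (t * (u:ℂ))) - lam R (t * (u:ℂ)) / (μ:ℂ))
        ≤ C * cabs (t * (u:ℂ)) ^ 2 := h1
      _ ≤ C * ((2 / R) * u) ^ 2 := by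
          have h2 : cabs (t * (u:ℂ)) ≤ (2 / R) * u := by
            rw [norm_mul, Complex.norm_real, Real.norm_eq_abs, _root_.abs_of_nonneg hu0]
            apply mul_le_mul_of_nonneg_right (htabs t ht) hu0
          have h3 : cabs (t * (u:ℂ)) ^ 2 ≤ ((2 / R) * u) ^ 2 := by
            apply pow_le_pow_left₀ (norm_nonneg _) h2
          exact mul_le_mul_of_nonneg_left h3 hC.le
  have hvB' : cabs v ≤ Real.exp (-m * u) := by
    rw [hvdef]; exact hvB t ht u hu0 hu1
  have hwB' : cabs w ≤ Real.exp (-m * u) := by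
    rw [hwdef]; exact hwB t ht u hu0 hu1
  have key := aux_pow_sub (Real.exp (-m * u)) (Real.exp_nonneg _) v w hvB' hwB' n
  have hun : u * n = s := by rw [hudef]; field_simp
  have hexp3 : Real.exp (-m * u) ^ (n - 1) ≤ Real.exp m * Real.exp (-m * s) := by
    rw [← Real.exp_nat_mul, ← Real.exp_add]
    apply Real.exp_le_exp.2
    have hcast : ((n - 1 : ℕ) : ℝ) = (n : ℝ) - 1 := by
      rw [Nat.cast_sub hn]; norm_num
    rw [hcast]
    have h10 : ((n:ℝ) - 1) * (-m * u) = -(m * s) + m * u := by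
      rw [← hun]; ring
    have h11 : m * u ≤ m * 1 := mul_le_mul_of_nonneg_left hu1 hm.le
    rw [h10]
    linarith
  calc cabs (v ^ n - w ^ n)
      ≤ n * cabs (v - w) * Real.exp (-m * u) ^ (n - 1) := key
    _ ≤ n * (C * ((2 / R) * u) ^ 2) * (Real.exp m * Real.exp (-m * s)) := by
        gcongr
    _ = M * s ^ 2 * Real.exp (-m * s) / n := by
        rw [hMdef, hudef]
        field_simp
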